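/- arXiv:2111.03289 — 2 statements merged into one kernel-verified Lean document; each statement's English description precedes it below -/
import Mathlib

section
/- Let d ≥ 1, τ > 0, and let x_1, …, x_k ∈ ℝ^d with ‖x_s‖_2 ≤ 1 for all s ∈ [k]. Set V_s = τ·I_d + Σ_{t=1}^{s} x_t x_tᵀ. For any subset J ⊆ [k], let W = τ·I_d + Σ_{s∈J} x_s x_sᵀ. Then (i) det(W) ≥ τ^d · Π_{s∈J} (1 + x_sᵀ V_{s-1}^{-1} x_s), and (ii) det(W) ≤ ((d·τ + |J|)/d)^d. -/
open Matrix Finset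

section AuxEPC
variable {d : ℕ}

lemma psd_vecMulVec (v : Fin d → ℝ) : (Matrix.vecMulVec v v).PosSemidef := by
  rw [Matrix.vecMulVec_eq Unit]
  simpa using Matrix.posSemidef_self_mul_conjTranspose (Matrix.replicateCol Unit v)

lemma psd_sum {F : Finset ℕ} (f : ℕ → Fin d → ℝ) :
    (∑ s ∈ F, Matrix.vecMulVec (f s) (f s)).PosSemidef := by
  classical
  induction F using Finset.induction_on with
  | empty => simpa using Matrix.PosSemidef.zero
  | insert _ _ h ih => rw [Finset.sum_insert h]; exact (psd_vecMulVec _).add ih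

lemma posDef_base {τ : ℝ} (hτ : 0 < τ) (F : Finset ℕ) (f : ℕ → Fin d → ℝ) :
    (τ • (1 : Matrix (Fin d) (Fin d) ℝ) + ∑ s ∈ F, Matrix.vecMulVec (f s) (f s)).PosDef := by
  apply Matrix.PosDef.add_posSemidef _ (psd_sum f)
  rw [Matrix.smul_one_eq_diagonal]
  exact Matrix.PosDef.diagonal fun _ => hτ

lemma det_add_vecMulVec {A : Matrix (Fin d) (Fin d) ℝ} (hA : IsUnit A.det) (u : Fin d → ℝ) :
    (A + Matrix.vecMulVec u u).det = A.det * (1 + u ⬝ᵥ A⁻¹ *ᵥ u) := by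
  rw [Matrix.vecMulVec_eq Unit, Matrix.det_add_replicateCol_mul_replicateRow hA]
  congr 1
  rw [Matrix.det_unique]
  simp [Matrix.mul_apply, Matrix.mulVec, dotProduct, Finset.mul_sum, Finset.sum_mul]
  ring_nf
  rw [Finset.sum_comm]

lemma quad_inv_mono {A B : Matrix (Fin d) (Fin d) ℝ} (hA : A.PosDef) (hB : B.PosDef)
    (hAB : (B - A).PosSemidef) (x : Fin d → ℝ) :
    x ⬝ᵥ B⁻¹ *ᵥ x ≤ x ⬝ᵥ A⁻¹ *ᵥ x := by
  set u := A⁻¹ *ᵥ x with hu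
  set v := B⁻¹ *ᵥ x with hv
  have hAu : A *ᵥ u = x := by
    rw [hu, Matrix.mulVec_mulVec, Matrix.mul_nonsing_inv _ (isUnit_iff_ne_zero.mpr hA.det_pos.ne'),
      Matrix.one_mulVec]
  have hBv : B *ᵥ v = x := by
    rw [hv, Matrix.mulVec_mulVec, Matrix.mul_nonsing_inv _ (isUnit_iff_ne_zero.mpr hB.det_pos.ne'),
      Matrix.one_mulVec]
  -- symmetry helper: w ⬝ᵥ A *ᵥ z = z ⬝ᵥ A *ᵥ w for symmetric A
  have symm : ∀ (M : Matrix (Fin d) (Fin d) ℝ), M.IsHermitian →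
      ∀ w z : Fin d → ℝ, w ⬝ᵥ M *ᵥ z = z ⬝ᵥ M *ᵥ w := by
    intro M hM w z
    have ht : Mᵀ = M := by
      ext i j
      have := congr_fun (congr_fun hM.eq i) j
      simpa [Matrix.conjTranspose_apply] using this
    rw [Matrix.dotProduct_mulVec, ← Matrix.vecMul_transpose, ht, dotProduct_comm]
  have key : x ⬝ᵥ A⁻¹ *ᵥ x - x ⬝ᵥ B⁻¹ *ᵥ x
      = v ⬝ᵥ (B - A) *ᵥ v + (v - u) ⬝ᵥ A *ᵥ (v - u) := by
    have e1 : v ⬝ᵥ B *ᵥ v = v ⬝ᵥ x := by rw [hBv]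
    have e2 : v ⬝ᵥ A *ᵥ u = v ⬝ᵥ x := by rw [hAu]
    have e3 : u ⬝ᵥ A *ᵥ v = v ⬝ᵥ x := by rw [symm A hA.isHermitian, hAu]
    have e4 : u ⬝ᵥ A *ᵥ u = u ⬝ᵥ x := by rw [hAu]
    have e5 : x ⬝ᵥ A⁻¹ *ᵥ x = u ⬝ᵥ x := by rw [← hu, dotProduct_comm]
    have e6 : x ⬝ᵥ B⁻¹ *ᵥ x = v ⬝ᵥ x := by rw [← hv, dotProduct_comm]
    rw [e5, e6]
    simp only [Matrix.sub_mulVec, Matrix.mulVec_sub, dotProduct_sub,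
      sub_dotProduct]
    rw [e1, e2, e3, e4]
    ring
  have h1 : 0 ≤ v ⬝ᵥ (B - A) *ᵥ v := by simpa using hAB.dotProduct_mulVec_nonneg v
  have h2 : 0 ≤ (v - u) ⬝ᵥ A *ᵥ (v - u) := by simpa using hA.posSemidef.dotProduct_mulVec_nonneg (v - u)
  linarith

lemma lower_bound (k : ℕ) (τ : ℝ) (hτ : 0 < τ)
    (x : ℕ → EuclideanSpace ℝ (Fin d))
    (V : ℕ → Matrix (Fin d) (Fin d) ℝ)
    (hV : ∀ s, V s = τ • (1 : Matrix (Fin d) (Fin d) ℝ)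
        + ∑ t ∈ Finset.Icc 1 s, Matrix.vecMulVec (x t) (x t))
    (J : Finset ℕ) (hJ : J ⊆ Finset.Icc 1 k) :
    τ ^ d * ∏ s ∈ J, (1 + x s ⬝ᵥ (V (s - 1))⁻¹ *ᵥ x s)
      ≤ (τ • (1 : Matrix (Fin d) (Fin d) ℝ) + ∑ s ∈ J, Matrix.vecMulVec (x s) (x s)).det := by
  induction J using Finset.induction_on_max with
  | empty => simp [Matrix.det_smul]
  | insert a s hmax ih =>
    have ha : a ∉ s := fun h => lt_irrefl a (hmax a h)
    have hs : s ⊆ Finset.Icc 1 k := fun t ht => hJ (Finset.mem_insert_of_mem ht)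
    have ha1 : 1 ≤ a := (Finset.mem_Icc.mp (hJ (Finset.mem_insert_self a s))).1
    have hsub : s ⊆ Finset.Icc 1 (a - 1) := by
      intro t ht
      exact Finset.mem_Icc.mpr ⟨(Finset.mem_Icc.mp (hs ht)).1, Nat.le_sub_one_of_lt (hmax t ht)⟩
    set A := τ • (1 : Matrix (Fin d) (Fin d) ℝ) + ∑ s ∈ s, Matrix.vecMulVec (x s) (x s) with hAdef
    have hApd : A.PosDef := posDef_base hτ s _
    have hVpd : (V (a - 1)).PosDef := by rw [hV]; exact posDef_base hτ _ _
    have hdiff : (V (a - 1) - A).PosSemidef := by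
      have : V (a - 1) - A
          = ∑ t ∈ Finset.Icc 1 (a - 1) \ s, Matrix.vecMulVec (x t) (x t) := by
        rw [hV, hAdef]
        have := Finset.sum_sdiff (f := fun t => Matrix.vecMulVec (x t) (x t)) hsub
        rw [← this]
        abel
      rw [this]; exact psd_sum _
    have mono := quad_inv_mono hApd hVpd hdiff (x a)
    have hva : 0 ≤ x a ⬝ᵥ (V (a - 1))⁻¹ *ᵥ x a := by
      simpa using hVpd.inv.posSemidef.dotProduct_mulVec_nonneg (x a)
    have hdetA : 0 < A.det := hApd.det_pos
    have hWeq : τ • (1 : Matrix (Fin d) (Fin d) ℝ)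
        + ∑ t ∈ insert a s, Matrix.vecMulVec (x t) (x t)
        = A + Matrix.vecMulVec (x a) (x a) := by
      rw [Finset.sum_insert ha, hAdef]; abel
    rw [hWeq, det_add_vecMulVec (isUnit_iff_ne_zero.mpr hdetA.ne') (x a),
      Finset.prod_insert ha]
    have ih' := ih hs
    have hc : (0:ℝ) ≤ 1 + x a ⬝ᵥ (V (a - 1))⁻¹ *ᵥ x a := by linarith
    have step1 : (τ ^ d * ∏ t ∈ s, (1 + x t ⬝ᵥ (V (t - 1))⁻¹ *ᵥ x t))
        * (1 + x a ⬝ᵥ (V (a - 1))⁻¹ *ᵥ x a) ≤ A.det * (1 + x a ⬝ᵥ (V (a - 1))⁻¹ *ᵥ x a) :=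
      mul_le_mul_of_nonneg_right ih' hc
    have step2 : A.det * (1 + x a ⬝ᵥ (V (a - 1))⁻¹ *ᵥ x a)
        ≤ A.det * (1 + x a ⬝ᵥ A⁻¹ *ᵥ x a) :=
      mul_le_mul_of_nonneg_left (by linarith) hdetA.le
    calc τ ^ d * ((1 + x a ⬝ᵥ (V (a - 1))⁻¹ *ᵥ x a) * ∏ t ∈ s, (1 + x t ⬝ᵥ (V (t - 1))⁻¹ *ᵥ x t))
        = (τ ^ d * ∏ t ∈ s, (1 + x t ⬝ᵥ (V (t - 1))⁻¹ *ᵥ x t))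
          * (1 + x a ⬝ᵥ (V (a - 1))⁻¹ *ᵥ x a) := by ring
      _ ≤ A.det * (1 + x a ⬝ᵥ (V (a - 1))⁻¹ *ᵥ x a) := step1
      _ ≤ A.det * (1 + x a ⬝ᵥ A⁻¹ *ᵥ x a) := step2

lemma trace_eq_sum_eig {A : Matrix (Fin d) (Fin d) ℝ} (hA : A.IsHermitian) :
    A.trace = ∑ i, hA.eigenvalues i := by
  simpa using hA.trace_eq_sum_eigenvalues

lemma det_le_trace_div_pow {A : Matrix (Fin d) (Fin d) ℝ} (hd : 1 ≤ d) (hA : A.PosSemidef) :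
    A.det ≤ (A.trace / d) ^ d := by
  have hA' := hA.isHermitian
  have hdet : A.det = ∏ i, hA'.eigenvalues i := by
    simpa using hA'.det_eq_prod_eigenvalues
  have htr : A.trace = ∑ i, hA'.eigenvalues i := trace_eq_sum_eig hA'
  have hnn : ∀ i, 0 ≤ hA'.eigenvalues i := hA.eigenvalues_nonneg
  have hd0 : (d : ℝ) ≠ 0 := Nat.cast_ne_zero.mpr (by omega)
  have amgm := Real.geom_mean_le_arith_mean_weighted Finset.univ (fun _ => 1 / (d : ℝ))
      (fun i => hA'.eigenvalues i) (fun i _ => by positivity)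
      (by simp [Finset.card_univ]; field_simp) (fun i _ => hnn i)
  have lhs_eq : (∏ i, hA'.eigenvalues i ^ (1 / (d : ℝ))) ^ d = ∏ i, hA'.eigenvalues i := by
    rw [← Finset.prod_pow]
    refine Finset.prod_congr rfl fun i _ => ?_
    rw [← Real.rpow_natCast (hA'.eigenvalues i ^ (1 / (d : ℝ))) d,
      ← Real.rpow_mul (hnn i), one_div, inv_mul_cancel₀ hd0, Real.rpow_one]
  have sum_eq : ∑ i : Fin d, (1 / (d : ℝ)) * hA'.eigenvalues i = A.trace / d := by
    rw [htr, ← Finset.mul_sum]; ring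
  calc A.det = (∏ i, hA'.eigenvalues i ^ (1 / (d : ℝ))) ^ d := by rw [lhs_eq, hdet]
    _ ≤ (A.trace / d) ^ d := by
        apply pow_le_pow_left₀ (Finset.prod_nonneg fun i _ => Real.rpow_nonneg (hnn i) _)
        rw [← sum_eq]; exact amgm

end AuxEPC

/-- Determinant bounds used in the proof of the elliptical potential count lemma:
for any `J ⊆ [k]` and `W = τ • I + ∑_{s ∈ J} x s (x s)ᵀ`,
(i) `det W ≥ τ^d · ∏_{s ∈ J} (1 + (x s)ᵀ (V (s-1))⁻¹ (x s))`, and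
(ii) `det W ≤ ((d·τ + |J|)/d)^d`. -/
theorem det_bounds_elliptical_potential
    (d k : ℕ) (hd : 1 ≤ d) (τ : ℝ) (hτ : 0 < τ)
    (x : ℕ → EuclideanSpace ℝ (Fin d))
    (hx : ∀ s ∈ Finset.Icc 1 k, ‖x s‖ ≤ 1)
    (V : ℕ → Matrix (Fin d) (Fin d) ℝ)
    (hV : ∀ s, V s = τ • (1 : Matrix (Fin d) (Fin d) ℝ)
        + ∑ t ∈ Finset.Icc 1 s, Matrix.vecMulVec (x t) (x t))
    (J : Finset ℕ) (hJ : J ⊆ Finset.Icc 1 k)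
    (W : Matrix (Fin d) (Fin d) ℝ)
    (hW : W = τ • (1 : Matrix (Fin d) (Fin d) ℝ)
        + ∑ s ∈ J, Matrix.vecMulVec (x s) (x s)) :
    τ ^ d * ∏ s ∈ J, (1 + x s ⬝ᵥ (V (s - 1))⁻¹ *ᵥ x s) ≤ W.det ∧
    W.det ≤ ((d * τ + J.card) / d) ^ d := by
  constructor
  · rw [hW]
    exact lower_bound k τ hτ x V hV J hJ
  · have hd' : (0:ℝ) < (d : ℝ) := by exact_mod_cast (by omega : 0 < d)
    have hWpsd : W.PosSemidef := by rw [hW]; exact (posDef_base hτ J _).posSemidef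
    have hsq : ∀ v : EuclideanSpace ℝ (Fin d), ∑ i, v i * v i = ‖v‖ ^ 2 := by
      intro v
      rw [EuclideanSpace.norm_eq, Real.sq_sqrt (Finset.sum_nonneg fun i _ => sq_nonneg _)]
      exact Finset.sum_congr rfl fun i _ => by rw [Real.norm_eq_abs, sq_abs, sq]
    have htrW : W.trace = d * τ + ∑ s ∈ J, ‖x s‖ ^ 2 := by
      rw [hW, Matrix.trace_add, Matrix.trace_smul, Matrix.trace_one, Matrix.trace_sum]
      congr 1
      · simp [mul_comm]
      · refine Finset.sum_congr rfl fun s _ => ?_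
        rw [← hsq]
        simp [Matrix.trace, Matrix.diag, Matrix.vecMulVec_apply]
    have htr_le : W.trace ≤ d * τ + J.card := by
      rw [htrW]
      have hsum : ∑ s ∈ J, ‖x s‖ ^ 2 ≤ ∑ s ∈ J, (1:ℝ) :=
        Finset.sum_le_sum fun s hs => pow_le_one₀ (norm_nonneg _) (hx s (hJ hs))
      simp only [Finset.sum_const, nsmul_eq_mul, mul_one] at hsum
      linarith
    have htr_nonneg : 0 ≤ W.trace := by
      rw [htrW]
      have h1 : (0:ℝ) ≤ d * τ := mul_nonneg (Nat.cast_nonneg d) hτ.le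
      have h2 : (0:ℝ) ≤ ∑ s ∈ J, ‖x s‖ ^ 2 := Finset.sum_nonneg fun s _ => sq_nonneg _
      linarith
    calc W.det ≤ (W.trace / d) ^ d := det_le_trace_div_pow hd hWpsd
      _ ≤ ((d * τ + J.card) / d) ^ d := by
          apply pow_le_pow_left₀ (div_nonneg htr_nonneg (Nat.cast_nonneg d))
          gcongr
end

section
/- Let d ≥ 1, ℓ ≥ 1, i ≥ 1 be integers and ι ≥ 1 a real. Let T be a finite index set, and for each t ∈ T let x_t ∈ ℝ^d, z_t ∈ ℝ, and η_t ∈ [0, 2^{1−i}]. Let θ*, θ ∈ ℝ^d with ‖θ*‖_2 ≤ 1 and ‖θ‖_2 ≤ 1, set μ = θ − θ*, ε_t(ϑ) = x_tᵀϑ − z_t, and W = 2^{−ℓ}·I_d + Σ_{t∈T} min{1, 2^{−ℓ}/|x_tᵀμ|}·x_t x_tᵀ. Assume that for each ϑ ∈ {θ*, θ}: |Σ_{t∈T} ⌊x_tᵀμ⌉_ℓ · ε_t(ϑ)| ≤ 4·√(ι · Σ_{t∈T} ⌊x_tᵀμ⌉_ℓ² · η_t) + 4·2^{−ℓ}·ι.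 Then μᵀ W μ ≤ 12·2^{−ℓ}·(√(|T|·2^{−i}·ι) + ι). -/
open Matrix Finset

/-- The clipping operator `⌊x⌉_ℓ := min{|x|, 2^{−ℓ}}·x/|x|` (with `0/0 = 0`). -/
noncomputable def clip (ℓ : ℕ) (x : ℝ) : ℝ :=
  min |x| ((2 : ℝ) ^ (-(ℓ : ℤ))) * (x / |x|)

lemma abs_clip_le (ℓ : ℕ) (y : ℝ) : |clip ℓ y| ≤ (2 : ℝ) ^ (-(ℓ : ℤ)) := by
  have hc : (0:ℝ) < (2 : ℝ) ^ (-(ℓ : ℤ)) := by positivity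
  by_cases hy : y = 0
  · simp [clip, hy, hc.le]
  · have h1 : |y| / |y| = 1 := div_self (abs_ne_zero.2 hy)
    rw [clip, abs_mul, abs_div, abs_abs, h1, mul_one,
      abs_of_nonneg (le_min (abs_nonneg _) hc.le)]
    exact min_le_right _ _

lemma clip_mul_self (ℓ : ℕ) (y : ℝ) :
    (if y = 0 then (1:ℝ) else min 1 ((2 : ℝ) ^ (-(ℓ : ℤ)) / |y|)) * y ^ 2
      = clip ℓ y * y := by
  by_cases hy : y = 0
  · simp [clip, hy]
  · rw [if_neg hy]
    have habs : |y| ≠ 0 := abs_ne_zero.2 hy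
    have h1 : min 1 ((2 : ℝ) ^ (-(ℓ : ℤ)) / |y|)
        = min |y| ((2 : ℝ) ^ (-(ℓ : ℤ))) / |y| := by
      have h2 := (min_div_div_right (abs_nonneg y) |y| ((2 : ℝ) ^ (-(ℓ : ℤ)))).symm
      rw [div_self habs] at h2
      exact h2.symm
    rw [h1, clip]
    field_simp

set_option maxHeartbeats 1000000 in
/-- Deterministic property (i) of the VARLin2 confidence set in generic form:
with `μ = θ − θ*`, `ε t ϑ = x tᵀϑ − z t`, variances `η t ∈ [0, 2^{1−i}]`, and
`W = 2^{−ℓ}·I + ∑_{t∈T} min{1, 2^{−ℓ}/|x tᵀμ|}·x t (x t)ᵀ`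
(the weight taken to be `1` when `x tᵀμ = 0`), assuming for each `ϑ ∈ {θ*, θ}`
`|∑_{t∈T} ⌊x tᵀμ⌉_ℓ · ε t ϑ| ≤ 4·√(ι·∑_{t∈T} ⌊x tᵀμ⌉_ℓ²·η t) + 4·2^{−ℓ}·ι`,
we have `μᵀWμ ≤ 12·2^{−ℓ}·(√(|T|·2^{−i}·ι) + ι)`. -/
theorem varlin2_confidence_property_one
    (d ℓ i : ℕ) (hd : 1 ≤ d) (hℓ : 1 ≤ ℓ) (hi : 1 ≤ i)
    (ι : ℝ) (hι : 1 ≤ ι)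
    (T : Finset ℕ)
    (x : ℕ → EuclideanSpace ℝ (Fin d)) (z : ℕ → ℝ) (η : ℕ → ℝ)
    (hη : ∀ t ∈ T, η t ∈ Set.Icc (0 : ℝ) ((2 : ℝ) ^ (1 - (i : ℤ))))
    (θstar θ : EuclideanSpace ℝ (Fin d)) (hθstar : ‖θstar‖ ≤ 1) (hθ : ‖θ‖ ≤ 1)
    (μ : EuclideanSpace ℝ (Fin d)) (hμ : μ = θ - θstar)
    (ε : ℕ → EuclideanSpace ℝ (Fin d) → ℝ)
    (hε : ∀ t ϑ, ε t ϑ = x t ⬝ᵥ ϑ - z t)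
    (W : Matrix (Fin d) (Fin d) ℝ)
    (hW : W = (2 : ℝ) ^ (-(ℓ : ℤ)) • (1 : Matrix (Fin d) (Fin d) ℝ)
        + ∑ t ∈ T,
            (if x t ⬝ᵥ μ = 0 then 1
              else min 1 ((2 : ℝ) ^ (-(ℓ : ℤ)) / |x t ⬝ᵥ μ|)) • Matrix.vecMulVec (x t) (x t))
    (ha : ∀ ϑ ∈ ({θstar, θ} : Set (EuclideanSpace ℝ (Fin d))),
        |∑ t ∈ T, clip ℓ (x t ⬝ᵥ μ) * ε t ϑ| ≤
          4 * Real.sqrt (ι * ∑ t ∈ T, (clip ℓ (x t ⬝ᵥ μ)) ^ 2 * η t)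
            + 4 * (2 : ℝ) ^ (-(ℓ : ℤ)) * ι) :
    μ ⬝ᵥ W *ᵥ μ ≤ 12 * (2 : ℝ) ^ (-(ℓ : ℤ))
      * (Real.sqrt ((T.card : ℝ) * (2 : ℝ) ^ (-(i : ℤ)) * ι) + ι) := by
  set c : ℝ := (2 : ℝ) ^ (-(ℓ : ℤ)) with hcdef
  have hc : (0:ℝ) < c := by positivity
  have hι0 : (0:ℝ) ≤ ι := le_trans zero_le_one hι
  -- quadratic form decomposition
  have hsplit : μ ⬝ᵥ W *ᵥ μ = c * (μ ⬝ᵥ μ)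
      + ∑ t ∈ T, (if x t ⬝ᵥ μ = 0 then (1:ℝ)
          else min 1 (c / |x t ⬝ᵥ μ|)) * (x t ⬝ᵥ μ) ^ 2 := by
    rw [hW, Matrix.add_mulVec, dotProduct_add]
    congr 1
    · rw [Matrix.smul_mulVec, Matrix.one_mulVec, dotProduct_smul, smul_eq_mul]
    · have h1 : ((∑ t ∈ T, (if x t ⬝ᵥ μ = 0 then (1:ℝ)
            else min 1 (c / |x t ⬝ᵥ μ|)) • Matrix.vecMulVec (x t) (x t)) *ᵥ μ)
          = ∑ t ∈ T, ((if x t ⬝ᵥ μ = 0 then (1:ℝ)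
            else min 1 (c / |x t ⬝ᵥ μ|)) • Matrix.vecMulVec (x t) (x t)) *ᵥ μ := by
        ext j
        simp only [Matrix.mulVec, dotProduct, Finset.sum_apply, Matrix.sum_apply,
          Finset.sum_mul]
        exact Finset.sum_comm
      rw [h1]
      have h2 : μ ⬝ᵥ (∑ t ∈ T, ((if x t ⬝ᵥ μ = 0 then (1:ℝ)
            else min 1 (c / |x t ⬝ᵥ μ|)) • Matrix.vecMulVec (x t) (x t)) *ᵥ μ)
          = ∑ t ∈ T, μ ⬝ᵥ (((if x t ⬝ᵥ μ = 0 then (1:ℝ)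
            else min 1 (c / |x t ⬝ᵥ μ|)) • Matrix.vecMulVec (x t) (x t)) *ᵥ μ) := by
        simp only [dotProduct, Finset.sum_apply, Finset.mul_sum]
        exact Finset.sum_comm
      rw [h2]
      refine Finset.sum_congr rfl fun t _ => ?_
      simp only [Matrix.mulVec, dotProduct, Matrix.smul_apply, Matrix.vecMulVec_apply,
        smul_eq_mul]
      rw [sq, Finset.sum_mul_sum, Finset.mul_sum]
      refine Finset.sum_congr rfl fun j _ => ?_
      rw [Finset.mul_sum, Finset.mul_sum]
      exact Finset.sum_congr rfl fun k _ => by ring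
  -- norm bound
  have hμnorm : ‖μ‖ ≤ 2 := by
    rw [hμ]
    calc ‖θ - θstar‖ ≤ ‖θ‖ + ‖θstar‖ := norm_sub_le _ _
    _ ≤ 2 := by linarith
  have hdot : μ ⬝ᵥ μ = ‖μ‖ ^ 2 := by
    rw [EuclideanSpace.norm_eq, Real.sq_sqrt (by positivity)]
    simp [dotProduct, Real.norm_eq_abs, sq_abs, sq]
  have hdot4 : μ ⬝ᵥ μ ≤ 4 := by
    rw [hdot]
    nlinarith [norm_nonneg μ]
  -- rewrite the weighted sum via clip
  have hQ : ∑ t ∈ T, (if x t ⬝ᵥ μ = 0 then (1:ℝ)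
        else min 1 (c / |x t ⬝ᵥ μ|)) * (x t ⬝ᵥ μ) ^ 2
      = ∑ t ∈ T, clip ℓ (x t ⬝ᵥ μ) * (x t ⬝ᵥ μ) :=
    Finset.sum_congr rfl fun t _ => clip_mul_self ℓ _
  -- difference of errors
  have hdiff : ∑ t ∈ T, clip ℓ (x t ⬝ᵥ μ) * (x t ⬝ᵥ μ)
      = (∑ t ∈ T, clip ℓ (x t ⬝ᵥ μ) * ε t θ)
        - ∑ t ∈ T, clip ℓ (x t ⬝ᵥ μ) * ε t θstar := by
    rw [← Finset.sum_sub_distrib]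
    refine Finset.sum_congr rfl fun t _ => ?_
    rw [hε, hε, hμ]
    have : x t ⬝ᵥ (θ - θstar) = x t ⬝ᵥ θ - x t ⬝ᵥ θstar := dotProduct_sub _ _ _
    rw [WithLp.ofLp_sub, this]
    ring
  set S : ℝ := ∑ t ∈ T, (clip ℓ (x t ⬝ᵥ μ)) ^ 2 * η t with hSdef
  have hS0 : 0 ≤ S := by
    refine Finset.sum_nonneg fun t ht => ?_
    exact mul_nonneg (sq_nonneg _) (hη t ht).1
  have hbound : ∑ t ∈ T, clip ℓ (x t ⬝ᵥ μ) * (x t ⬝ᵥ μ)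
      ≤ 8 * Real.sqrt (ι * S) + 8 * c * ι := by
    have h1 := ha θ (Or.inr rfl)
    have h2 := ha θstar (Or.inl rfl)
    rw [hdiff]
    have := abs_sub_abs_le_abs_sub (∑ t ∈ T, clip ℓ (x t ⬝ᵥ μ) * ε t θ)
      (∑ t ∈ T, clip ℓ (x t ⬝ᵥ μ) * ε t θstar)
    calc (∑ t ∈ T, clip ℓ (x t ⬝ᵥ μ) * ε t θ)
          - ∑ t ∈ T, clip ℓ (x t ⬝ᵥ μ) * ε t θstar
        ≤ |∑ t ∈ T, clip ℓ (x t ⬝ᵥ μ) * ε t θ|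
          + |∑ t ∈ T, clip ℓ (x t ⬝ᵥ μ) * ε t θstar| := by
          have := abs_sub (∑ t ∈ T, clip ℓ (x t ⬝ᵥ μ) * ε t θ)
            (∑ t ∈ T, clip ℓ (x t ⬝ᵥ μ) * ε t θstar)
          calc _ ≤ |(∑ t ∈ T, clip ℓ (x t ⬝ᵥ μ) * ε t θ)
              - ∑ t ∈ T, clip ℓ (x t ⬝ᵥ μ) * ε t θstar| := le_abs_self _
          _ ≤ _ := abs_sub _ _
      _ ≤ 8 * Real.sqrt (ι * S) + 8 * c * ι := by linarith
  -- bound S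
  have hSle : S ≤ (T.card : ℝ) * (c ^ 2 * (2 * (2:ℝ) ^ (-(i : ℤ)))) := by
    have h2i : (2:ℝ) ^ (1 - (i : ℤ)) = 2 * (2:ℝ) ^ (-(i : ℤ)) := by
      rw [sub_eq_add_neg, zpow_add₀ (by norm_num : (2:ℝ) ≠ 0)]
      norm_num
    calc S ≤ ∑ _t ∈ T, c ^ 2 * (2 * (2:ℝ) ^ (-(i : ℤ))) := by
          refine Finset.sum_le_sum fun t ht => ?_
          have hcl : (clip ℓ (x t ⬝ᵥ μ)) ^ 2 ≤ c ^ 2 := by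
            have h := abs_clip_le ℓ (x t ⬝ᵥ μ)
            nlinarith [abs_nonneg (clip ℓ (x t ⬝ᵥ μ)), sq_abs (clip ℓ (x t ⬝ᵥ μ))]
          have hηb := (hη t ht).2
          rw [h2i] at hηb
          exact mul_le_mul hcl hηb (hη t ht).1 (by positivity)
      _ = (T.card : ℝ) * (c ^ 2 * (2 * (2:ℝ) ^ (-(i : ℤ)))) := by
          rw [Finset.sum_const, nsmul_eq_mul]
  -- sqrt comparison
  have hsqrt : 8 * Real.sqrt (ι * S)
      ≤ 12 * c * Real.sqrt ((T.card : ℝ) * (2:ℝ) ^ (-(i : ℤ)) * ι) := by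
    have h8 : Real.sqrt 64 = 8 := by
      rw [show (64:ℝ) = 8 ^ 2 by norm_num]
      exact Real.sqrt_sq (by norm_num : (0:ℝ) ≤ 8)
    have h64 : (8:ℝ) * Real.sqrt (ι * S) = Real.sqrt (64 * (ι * S)) := by
      rw [Real.sqrt_mul (by norm_num : (0:ℝ) ≤ 64), h8]
    have h144 : (12:ℝ) * c * Real.sqrt ((T.card : ℝ) * (2:ℝ) ^ (-(i : ℤ)) * ι)
        = Real.sqrt ((12 * c) ^ 2 * ((T.card : ℝ) * (2:ℝ) ^ (-(i : ℤ)) * ι)) := by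
      rw [Real.sqrt_mul (sq_nonneg _), Real.sqrt_sq (by positivity : (0:ℝ) ≤ 12 * c)]
    rw [h64, h144]
    apply Real.sqrt_le_sqrt
    have hT0 : (0:ℝ) ≤ (T.card : ℝ) := Nat.cast_nonneg _
    have h2i0 : (0:ℝ) ≤ (2:ℝ) ^ (-(i : ℤ)) := by positivity
    nlinarith [mul_le_mul_of_nonneg_left hSle hι0,
      mul_nonneg (mul_nonneg hT0 h2i0) hι0, sq_nonneg c]
  -- final assembly
  have hfin : 12 * c * (Real.sqrt ((T.card : ℝ) * (2:ℝ) ^ (-(i : ℤ)) * ι) + ι)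
      = 12 * c * Real.sqrt ((T.card : ℝ) * (2:ℝ) ^ (-(i : ℤ)) * ι) + 12 * c * ι := by
    ring
  rw [hsplit, hQ, hfin]
  have h4c : c * (μ ⬝ᵥ μ) ≤ 4 * c := by nlinarith
  have hcι : 4 * c ≤ 4 * c * ι := by nlinarith
  linarith
end
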